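/- Let Ψ : ℝ⁴ → ℂ⁴ be a continuously differentiable Dirac solution for the 4-potential a = (a₀,a₁,a₂,a₃) and mass κ with κ ≠ 0, and suppose that (Ψ*δ₄Ψ)(x) = 0 for every x ∈ ℝ⁴. Then the open set {x : (Ψᵀγ₂Ψ)(x) ≠ 0} is dense in the open set {x : Ψ(x) ≠ 0}; equivalently, for every nonempty open subset U of {x : Ψ(x) ≠ 0} there exists x ∈ U with (Ψᵀγ₂Ψ)(x) ≠ 0. -/

import Mathlib

noncomputable section

open Complex Matrix MeasureTheory

/-- The Dirac matrix γ₁ in the standard representation. -/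
def γ1 : Matrix (Fin 4) (Fin 4) ℂ := !![0,0,0,-I; 0,0,-I,0; 0,I,0,0; I,0,0,0]
/-- The Dirac matrix γ₂ in the standard representation. -/
def γ2 : Matrix (Fin 4) (Fin 4) ℂ := !![0,0,0,-1; 0,0,1,0; 0,1,0,0; -1,0,0,0]
/-- The Dirac matrix γ₃ in the standard representation. -/
def γ3 : Matrix (Fin 4) (Fin 4) ℂ := !![0,0,-I,0; 0,0,0,I; I,0,0,0; 0,-I,0,0]
/-- The Dirac matrix γ₄ in the standard representation. -/
def γ4 : Matrix (Fin 4) (Fin 4) ℂ := !![1,0,0,0; 0,1,0,0; 0,0,-1,0; 0,0,0,-1]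
/-- γ₅ = γ₁γ₂γ₃γ₄. -/
def γ5 : Matrix (Fin 4) (Fin 4) ℂ := γ1 * γ2 * γ3 * γ4
/-- δ₁ = γ₁ + γ₅γ₁. -/
def δ1 : Matrix (Fin 4) (Fin 4) ℂ := γ1 + γ5 * γ1
/-- δ₂ = γ₂ + γ₅γ₂. -/
def δ2 : Matrix (Fin 4) (Fin 4) ℂ := γ2 + γ5 * γ2
/-- δ₃ = γ₃ + γ₅γ₃. -/
def δ3 : Matrix (Fin 4) (Fin 4) ℂ := γ3 + γ5 * γ3
/-- δ₄ = γ₄ + γ₅γ₄. -/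
def δ4 : Matrix (Fin 4) (Fin 4) ℂ := γ4 + γ5 * γ4

/-- The sesquilinear form v* M v (v a column vector, v* its conjugate transpose). -/
def qc (M : Matrix (Fin 4) (Fin 4) ℂ) (v : Fin 4 → ℂ) : ℂ := star v ⬝ᵥ M.mulVec v
/-- The bilinear form vᵀ M v (v a column vector, vᵀ its transpose). -/
def qt (M : Matrix (Fin 4) (Fin 4) ℂ) (v : Fin 4 → ℂ) : ℂ := v ⬝ᵥ M.mulVec v

/-- The partial derivative ∂_μ of a spinor field on ℝ⁴. -/
def pd (μ : Fin 4) (Ψ : (Fin 4 → ℝ) → Fin 4 → ℂ) (x : Fin 4 → ℝ) : Fin 4 → ℂ :=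
  fderiv ℝ Ψ x (Pi.single μ 1)

/-- The partial derivative ∂_μ of a complex scalar field on ℝ⁴. -/
def pds (μ : Fin 4) (g : (Fin 4 → ℝ) → ℂ) (x : Fin 4 → ℝ) : ℂ :=
  fderiv ℝ g x (Pi.single μ 1)

/-- The bidirectional derivative ∂_μ↔(Ψ* M Ψ) := Ψ* M (∂_μΨ) − (∂_μΨ)* M Ψ. -/
def bd (μ : Fin 4) (M : Matrix (Fin 4) (Fin 4) ℂ) (Ψ : (Fin 4 → ℝ) → Fin 4 → ℂ)
    (x : Fin 4 → ℝ) : ℂ :=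
  star (Ψ x) ⬝ᵥ M.mulVec (pd μ Ψ x) - star (pd μ Ψ x) ⬝ᵥ M.mulVec (Ψ x)

/-- Ψ is a Dirac solution for the 4-potential (a₀,a₁,a₂,a₃) and mass κ:
Ψ is differentiable and Σ_{μ=1}^{3} γ_μ(∂_μΨ − i a_μΨ) − i γ₄(∂₀Ψ + i a₀Ψ) + κΨ = 0 on ℝ⁴. -/
def DiracSolution (Ψ : (Fin 4 → ℝ) → Fin 4 → ℂ)
    (a0 a1 a2 a3 : (Fin 4 → ℝ) → ℝ) (κ : ℝ) : Prop :=
  Differentiable ℝ Ψ ∧ ∀ x : Fin 4 → ℝ,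
    γ1.mulVec (pd 1 Ψ x - (I * (a1 x : ℂ)) • Ψ x)
      + γ2.mulVec (pd 2 Ψ x - (I * (a2 x : ℂ)) • Ψ x)
      + γ3.mulVec (pd 3 Ψ x - (I * (a3 x : ℂ)) • Ψ x)
      - I • γ4.mulVec (pd 0 Ψ x + (I * (a0 x : ℂ)) • Ψ x)
      + (κ : ℂ) • Ψ x = 0

-- Auxiliary lemmas

lemma aux_g12 : γ1 * γ2 = !![I,0,0,0; 0,-I,0,0; 0,0,I,0; 0,0,0,-I] := by
  ext i j
  fin_cases i <;> fin_cases j <;>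
    simp [γ1, γ2, Matrix.mul_apply, Fin.sum_univ_four, Matrix.vecHead, Matrix.vecTail]

lemma aux_g123 : γ1 * γ2 * γ3 = !![0,0,1,0; 0,0,0,1; -1,0,0,0; 0,-1,0,0] := by
  rw [aux_g12]
  ext i j
  fin_cases i <;> fin_cases j <;>
    simp [γ3, Matrix.mul_apply, Fin.sum_univ_four, Matrix.vecHead, Matrix.vecTail,
      Complex.I_mul_I]

lemma aux_g5 : γ5 = !![0,0,-1,0; 0,0,0,-1; -1,0,0,0; 0,-1,0,0] := by
  have h5 : γ5 = γ1 * γ2 * γ3 * γ4 := rfl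
  rw [h5, aux_g123]
  ext i j
  fin_cases i <;> fin_cases j <;>
    simp [γ4, Matrix.mul_apply, Fin.sum_univ_four, Matrix.vecHead, Matrix.vecTail]

lemma aux_delta4 : δ4 = !![1,0,1,0; 0,1,0,1; -1,0,-1,0; 0,-1,0,-1] := by
  have h : δ4 = γ4 + γ5 * γ4 := rfl
  rw [h, aux_g5]
  ext i j
  fin_cases i <;> fin_cases j <;>
    simp [γ4, Matrix.mul_apply, Fin.sum_univ_four, Matrix.vecHead, Matrix.vecTail]

lemma aux_qc (v : Fin 4 → ℂ) : qc δ4 v =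
    (starRingEnd ℂ) (v 0 - v 2) * (v 0 + v 2) + (starRingEnd ℂ) (v 1 - v 3) * (v 1 + v 3) := by
  simp [qc, aux_delta4, Matrix.mulVec, dotProduct, Fin.sum_univ_four,
    Matrix.vecHead, Matrix.vecTail, map_sub, map_add]
  ring

lemma aux_qt (v : Fin 4 → ℂ) : qt γ2 v = 2 * (v 1 * v 2 - v 0 * v 3) := by
  simp [qt, γ2, Matrix.mulVec, dotProduct, Fin.sum_univ_four,
    Matrix.vecHead, Matrix.vecTail]
  ring

lemma aux_sumsq {z w : ℂ} (h : (starRingEnd ℂ) z * z + (starRingEnd ℂ) w * w = 0) :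
    z = 0 ∧ w = 0 := by
  rw [Complex.conj_mul', Complex.conj_mul'] at h
  have hre := congrArg Complex.re h
  simp only [Complex.add_re, Complex.zero_re] at hre
  rw [← Complex.ofReal_pow, ← Complex.ofReal_pow, Complex.ofReal_re, Complex.ofReal_re] at hre
  have hz : ‖z‖ = 0 := by nlinarith [norm_nonneg z, norm_nonneg w, sq_nonneg ‖z‖, sq_nonneg ‖w‖]
  have hw : ‖w‖ = 0 := by nlinarith [norm_nonneg z, norm_nonneg w, sq_nonneg ‖z‖, sq_nonneg ‖w‖]
  exact ⟨norm_eq_zero.mp hz, norm_eq_zero.mp hw⟩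

lemma aux_dichotomy (v : Fin 4 → ℂ) (h1 : qc δ4 v = 0) (h2 : qt γ2 v = 0) :
    (v 2 = v 0 ∧ v 3 = v 1) ∨ (v 2 = -(v 0) ∧ v 3 = -(v 1)) := by
  rw [aux_qc] at h1
  rw [aux_qt] at h2
  set p1 := v 0 + v 2 with hp1d
  set p2 := v 1 + v 3 with hp2d
  set q1 := v 0 - v 2 with hq1d
  set q2 := v 1 - v 3 with hq2d
  have h2' : p1 * q2 - p2 * q1 = 0 := by rw [hp1d, hp2d, hq1d, hq2d]; linear_combination h2
  by_cases hq : q1 = 0 ∧ q2 = 0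
  · left
    constructor
    · linear_combination -hq.1
    · linear_combination -hq.2
  · right
    have h1c : (starRingEnd ℂ) p1 * q1 + (starRingEnd ℂ) p2 * q2 = 0 := by
      have := congrArg (starRingEnd ℂ) h1
      simp only [map_add, _root_.map_mul, map_zero, RingHomCompTriple.comp_apply,
        RingHom.id_apply, Complex.conj_conj] at this
      linear_combination this
    have hp1 : ((starRingEnd ℂ) q1 * q1 + (starRingEnd ℂ) q2 * q2) * p1 = 0 := by
      linear_combination q1 * h1 + (starRingEnd ℂ) q2 * h2'
    have hp2 : ((starRingEnd ℂ) q1 * q1 + (starRingEnd ℂ) q2 * q2) * p2 = 0 := by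
      linear_combination q2 * h1 - (starRingEnd ℂ) q1 * h2'
    have hfac : ((starRingEnd ℂ) q1 * q1 + (starRingEnd ℂ) q2 * q2) ≠ 0 := by
      intro h
      exact hq (aux_sumsq h)
    have e1 : p1 = 0 := by
      rcases mul_eq_zero.mp hp1 with h | h
      · exact absurd h hfac
      · exact h
    have e2 : p2 = 0 := by
      rcases mul_eq_zero.mp hp2 with h | h
      · exact absurd h hfac
      · exact h
    constructor
    · linear_combination e1
    · linear_combination e2

lemma aux_keyAlg (D0 D1 D2 D3 P : Fin 4 → ℂ) (A0 A1 A2 A3 : ℝ) (κ : ℝ) (s : ℂ)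
    (hs : s = 1 ∨ s = -1)
    (heq : γ1.mulVec (D1 - (I * (A1 : ℂ)) • P)
      + γ2.mulVec (D2 - (I * (A2 : ℂ)) • P)
      + γ3.mulVec (D3 - (I * (A3 : ℂ)) • P)
      - I • γ4.mulVec (D0 + (I * (A0 : ℂ)) • P)
      + (κ : ℂ) • P = 0)
    (h2 : P 2 = s * P 0) (h3 : P 3 = s * P 1)
    (d02 : D0 2 = s * D0 0) (d03 : D0 3 = s * D0 1)
    (d12 : D1 2 = s * D1 0) (d13 : D1 3 = s * D1 1)
    (d22 : D2 2 = s * D2 0) (d23 : D2 3 = s * D2 1)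
    (d32 : D3 2 = s * D3 0) (d33 : D3 3 = s * D3 1)
    (hκ : κ ≠ 0) : P = 0 := by
  have hκ' : (2 * (κ:ℂ)) ≠ 0 := by
    simp [Complex.ofReal_ne_zero, hκ]
  have e0 := congrFun heq 0
  have e1 := congrFun heq 1
  have e2 := congrFun heq 2
  have e3 := congrFun heq 3
  simp only [Pi.add_apply, Pi.sub_apply, Pi.smul_apply, Pi.zero_apply, smul_eq_mul] at e0 e1 e2 e3
  simp [γ1, γ2, γ3, γ4, Matrix.mulVec, dotProduct, Fin.sum_univ_four,
    Matrix.vecHead, Matrix.vecTail] at e0 e1 e2 e3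
  simp only [h2, h3, d02, d03, d12, d13, d22, d23, d32, d33] at e0 e1 e2 e3
  have h0 : P 0 = 0 := by
    rcases hs with rfl | rfl
    · exact (mul_eq_zero.mp (by linear_combination e0 + e2)).resolve_left hκ'
    · exact (mul_eq_zero.mp (by linear_combination e0 - e2)).resolve_left hκ'
  have h1 : P 1 = 0 := by
    rcases hs with rfl | rfl
    · exact (mul_eq_zero.mp (by linear_combination e1 + e3)).resolve_left hκ'
    · exact (mul_eq_zero.mp (by linear_combination e1 - e3)).resolve_left hκ'
  funext i
  fin_cases i
  · exact h0
  · exact h1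
  · simp [h2, h0]
  · simp [h3, h1]

-- ==== calculus glue ====
lemma aux_pd_comp (Ψ : (Fin 4 → ℝ) → Fin 4 → ℂ) (hdiff : Differentiable ℝ Ψ)
    (μ : Fin 4) (x : Fin 4 → ℝ) (j : Fin 4) :
    pd μ Ψ x j = fderiv ℝ (fun y => Ψ y j) x (Pi.single μ 1) := by
  have hF : HasFDerivAt Ψ (fderiv ℝ Ψ x) x := (hdiff x).hasFDerivAt
  have h := (ContinuousLinearMap.proj (R := ℝ) (φ := fun _ : Fin 4 => ℂ) j).hasFDerivAt.comp x hF
  have h' : HasFDerivAt (fun y => Ψ y j)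
      ((ContinuousLinearMap.proj (R := ℝ) (φ := fun _ : Fin 4 => ℂ) j).comp (fderiv ℝ Ψ x)) x := h
  rw [h'.fderiv]
  rfl

lemma aux_diff_comp (Ψ : (Fin 4 → ℝ) → Fin 4 → ℂ) (hdiff : Differentiable ℝ Ψ)
    (x : Fin 4 → ℝ) (j : Fin 4) : DifferentiableAt ℝ (fun y => Ψ y j) x :=
  ((ContinuousLinearMap.proj (R := ℝ) (φ := fun _ : Fin 4 => ℂ) j).hasFDerivAt.comp x
    (hdiff x).hasFDerivAt).differentiableAt

lemma aux_deriv_rel (Ψ : (Fin 4 → ℝ) → Fin 4 → ℂ) (hdiff : Differentiable ℝ Ψ)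
    (s : ℂ) (j k : Fin 4) (x₀ : Fin 4 → ℝ) (ε : ℝ) (hx : x₀ ∈ Metric.ball x₀ ε)
    (h : ∀ y ∈ Metric.ball x₀ ε, Ψ y j = s * Ψ y k) (μ : Fin 4) :
    pd μ Ψ x₀ j = s * pd μ Ψ x₀ k := by
  have hev : (fun y => Ψ y j) =ᶠ[nhds x₀] (fun y => s * Ψ y k) :=
    Filter.eventuallyEq_of_mem (Metric.isOpen_ball.mem_nhds hx) h
  rw [aux_pd_comp Ψ hdiff μ x₀ j, aux_pd_comp Ψ hdiff μ x₀ k,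
    hev.fderiv_eq, fderiv_const_mul (aux_diff_comp Ψ hdiff x₀ k)]
  simp


/-- if a C¹ Dirac solution with κ ≠ 0 satisfies Ψ*δ₄Ψ ≡ 0, then
{x : Ψᵀγ₂Ψ ≠ 0} is dense in {x : Ψ(x) ≠ 0}: every nonempty open subset of the support
of Ψ contains a point where Ψᵀγ₂Ψ ≠ 0. -/
theorem gamma2_form_dense_in_support
    (Ψ : (Fin 4 → ℝ) → Fin 4 → ℂ)
    (a0 a1 a2 a3 : (Fin 4 → ℝ) → ℝ) (κ : ℝ)
    (hC1 : ContDiff ℝ 1 Ψ)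
    (hΨ : DiracSolution Ψ a0 a1 a2 a3 κ) (hκ : κ ≠ 0)
    (hδ4 : ∀ x, qc δ4 (Ψ x) = 0) :
    ∀ U : Set (Fin 4 → ℝ), IsOpen U → U.Nonempty → U ⊆ {x | Ψ x ≠ 0} →
      ∃ x ∈ U, qt γ2 (Ψ x) ≠ 0 := by
  obtain ⟨hdiff, heq⟩ := hΨ
  intro U hU hUne hUsub
  by_contra hcon
  push_neg at hcon
  obtain ⟨x₀, hx₀⟩ := hUne
  obtain ⟨ε, hε, hball⟩ := Metric.isOpen_iff.mp hU x₀ hx₀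
  have hx₀b : x₀ ∈ Metric.ball x₀ ε := Metric.mem_ball_self hε
  have hcont : ∀ j : Fin 4, Continuous fun y => Ψ y j :=
    fun j => (continuous_apply j).comp hC1.continuous
  -- dichotomy on U
  have hdich : ∀ y ∈ U, (Ψ y 2 = Ψ y 0 ∧ Ψ y 3 = Ψ y 1) ∨
      (Ψ y 2 = -(Ψ y 0) ∧ Ψ y 3 = -(Ψ y 1)) :=
    fun y hy => aux_dichotomy (Ψ y) (hδ4 y) (hcon y hy)
  -- the two open sets
  set Sq : Set (Fin 4 → ℝ) :=
    ((fun y => Ψ y 2 - Ψ y 0) ⁻¹' {z | z ≠ 0}) ∪ ((fun y => Ψ y 3 - Ψ y 1) ⁻¹' {z | z ≠ 0})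
    with hSqdef
  set Sp : Set (Fin 4 → ℝ) :=
    ((fun y => Ψ y 2 + Ψ y 0) ⁻¹' {z | z ≠ 0}) ∪ ((fun y => Ψ y 3 + Ψ y 1) ⁻¹' {z | z ≠ 0})
    with hSpdef
  have hSqo : IsOpen Sq :=
    (isOpen_ne.preimage ((hcont 2).sub (hcont 0))).union
      (isOpen_ne.preimage ((hcont 3).sub (hcont 1)))
  have hSpo : IsOpen Sp :=
    (isOpen_ne.preimage ((hcont 2).add (hcont 0))).union
      (isOpen_ne.preimage ((hcont 3).add (hcont 1)))
  have hcover : Metric.ball x₀ ε ⊆ (Sq ∩ Metric.ball x₀ ε) ∪ (Sp ∩ Metric.ball x₀ ε) := by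
    intro y hy
    by_contra hny
    simp only [Set.mem_union, Set.mem_inter_iff, not_or, not_and] at hny
    have h1 : y ∉ Sq := fun h => (hny.1 h) hy
    have h2 : y ∉ Sp := fun h => (hny.2 h) hy
    simp only [hSqdef, hSpdef, Set.mem_union, Set.mem_preimage, Set.mem_setOf_eq, not_or,
      not_not] at h1 h2
    have hne : Ψ y ≠ 0 := hUsub (hball hy)
    apply hne
    funext i
    fin_cases i
    · show Ψ y 0 = 0; linear_combination (h2.1 - h1.1) / 2
    · show Ψ y 1 = 0; linear_combination (h2.2 - h1.2) / 2
    · show Ψ y 2 = 0; linear_combination (h2.1 + h1.1) / 2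
    · show Ψ y 3 = 0; linear_combination (h2.2 + h1.2) / 2
  have hdisj : Disjoint (Sq ∩ Metric.ball x₀ ε) (Sp ∩ Metric.ball x₀ ε) := by
    rw [Set.disjoint_left]
    rintro y ⟨hyq, hyb⟩ ⟨hyp, _⟩
    simp only [hSqdef, hSpdef, Set.mem_union, Set.mem_preimage, Set.mem_setOf_eq] at hyq hyp
    rcases hdich y (hball hyb) with ⟨ha, hb⟩ | ⟨ha, hb⟩
    · rcases hyq with h | h
      · exact h (by rw [ha]; ring)
      · exact h (by rw [hb]; ring)
    · rcases hyp with h | h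
      · exact h (by rw [ha]; ring)
      · exact h (by rw [hb]; ring)
  have hpc : IsPreconnected (Metric.ball x₀ ε) := (convex_ball x₀ ε).isPreconnected
  have hsub := hpc.subset_or_subset (hSqo.inter Metric.isOpen_ball)
    (hSpo.inter Metric.isOpen_ball) hdisj hcover
  -- extract sign and relation on the ball
  have hrel : ∃ s : ℂ, (s = 1 ∨ s = -1) ∧
      ∀ y ∈ Metric.ball x₀ ε, Ψ y 2 = s * Ψ y 0 ∧ Ψ y 3 = s * Ψ y 1 := by
    rcases hsub with hsb | hsb
    · refine ⟨-1, Or.inr rfl, fun y hy => ?_⟩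
      have hyq := (hsb hy).1
      simp only [hSqdef, Set.mem_union, Set.mem_preimage, Set.mem_setOf_eq] at hyq
      rcases hdich y (hball hy) with ⟨ha, hb⟩ | ⟨ha, hb⟩
      · exfalso
        rcases hyq with h | h
        · exact h (by rw [ha]; ring)
        · exact h (by rw [hb]; ring)
      · constructor
        · rw [ha]; ring
        · rw [hb]; ring
    · refine ⟨1, Or.inl rfl, fun y hy => ?_⟩
      have hyp := (hsb hy).1
      simp only [hSpdef, Set.mem_union, Set.mem_preimage, Set.mem_setOf_eq] at hyp
      rcases hdich y (hball hy) with ⟨ha, hb⟩ | ⟨ha, hb⟩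
      · constructor
        · rw [ha]; ring
        · rw [hb]; ring
      · exfalso
        rcases hyp with h | h
        · exact h (by rw [ha]; ring)
        · exact h (by rw [hb]; ring)
  obtain ⟨s, hs, hrel⟩ := hrel
  -- derivative relations at x₀
  have hd20 : ∀ μ, pd μ Ψ x₀ 2 = s * pd μ Ψ x₀ 0 :=
    fun μ => aux_deriv_rel Ψ hdiff s 2 0 x₀ ε hx₀b (fun y hy => (hrel y hy).1) μ
  have hd31 : ∀ μ, pd μ Ψ x₀ 3 = s * pd μ Ψ x₀ 1 :=
    fun μ => aux_deriv_rel Ψ hdiff s 3 1 x₀ ε hx₀b (fun y hy => (hrel y hy).2) μ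
  have hzero : Ψ x₀ = 0 :=
    aux_keyAlg (pd 0 Ψ x₀) (pd 1 Ψ x₀) (pd 2 Ψ x₀) (pd 3 Ψ x₀) (Ψ x₀)
      (a0 x₀) (a1 x₀) (a2 x₀) (a3 x₀) κ s hs (heq x₀)
      (hrel x₀ hx₀b).1 (hrel x₀ hx₀b).2
      (hd20 0) (hd31 0) (hd20 1) (hd31 1) (hd20 2) (hd31 2) (hd20 3) (hd31 3) hκ
  exact hUsub hx₀ hzero
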